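/- Let G be a diregular (2,2,+2)-digraph (order 9) and let u, v be vertices with a unique common out-neighbour u₂, where N⁺(u) = {u₁, u₂} and N⁺(v) = {v₁, u₂} with u₁ ≠ v₁. If v ∉ O(u) then v ∈ N⁺(u₁), and if v₁ ∉ O(u) then v₁ ∈ N⁺(u₁). -/

import Mathlib

open scoped Classical

/-- There is a directed walk of length `n` from `u` to `v` in the digraph with
arc relation `A` (the walk is recorded as its list of `n+1` vertices). -/
def HasWalkLen {V : Type*} (A : V → V → Prop) (n : ℕ) (u v : V) : Prop :=
  ∃ l : List V, l.head? = some u ∧ l.getLast? = some v ∧ l.Chain' A ∧ l.length = n + 1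

/-- The distance from `u` to `v` is at most `n`. -/
def DistLe {V : Type*} (A : V → V → Prop) (n : ℕ) (u v : V) : Prop :=
  ∃ m ≤ n, HasWalkLen A m u v

/-- The distance from `u` to `v` is exactly `n`. -/
def DistEq {V : Type*} (A : V → V → Prop) (n : ℕ) (u v : V) : Prop :=
  HasWalkLen A n u v ∧ ∀ m < n, ¬ HasWalkLen A m u v

/-- A digraph is `k`-geodetic: between any ordered pair of vertices there is at
most one directed path of length at most `k`. -/
def Geodetic {V : Type*} (A : V → V → Prop) (k : ℕ) : Prop :=
  ∀ u v : V, ∀ l₁ l₂ : List V,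
    (l₁.head? = some u ∧ l₁.getLast? = some v ∧ l₁.Chain' A ∧ l₁.length ≤ k + 1) →
    (l₂.head? = some u ∧ l₂.getLast? = some v ∧ l₂.Chain' A ∧ l₂.length ≤ k + 1) →
    l₁ = l₂

/-- Out-neighbourhood. -/
def Nplus {V : Type*} (A : V → V → Prop) (u : V) : Set V := {v | A u v}

/-- Out-degree. -/
noncomputable def outDeg {V : Type*} (A : V → V → Prop) (u : V) : ℕ := {v | A u v}.ncard

/-- In-degree. -/
noncomputable def inDeg {V : Type*} (A : V → V → Prop) (u : V) : ℕ := {v | A v u}.ncard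

/-- `T_k(u)`: the set of vertices at distance at most `k` from `u`. -/
def Tset {V : Type*} (A : V → V → Prop) (k : ℕ) (u : V) : Set V := {v | DistLe A k u v}

/-- `O(u)`: the outliers of `u`, i.e. vertices at distance at least `k+1` from `u`. -/
def Outliers {V : Type*} (A : V → V → Prop) (k : ℕ) (u : V) : Set V := {v | ¬ DistLe A k u v}

lemma walk0 {V : Type*} {A : V → V → Prop} {u v : V} (h : HasWalkLen A 0 u v) : u = v := by
  obtain ⟨l, h1, h2, h3, h4⟩ := h
  obtain ⟨a, rfl⟩ := List.length_eq_one_iff.mp h4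
  simp at h1 h2; subst h1; exact h2

lemma walk1 {V : Type*} {A : V → V → Prop} {u v : V} (h : HasWalkLen A 1 u v) : A u v := by
  obtain ⟨l, h1, h2, h3, h4⟩ := h
  obtain ⟨a, b, rfl⟩ := List.length_eq_two.mp h4
  simp at h1 h2
  subst h1; subst h2
  simpa [List.Chain'] using h3

lemma walk2 {V : Type*} {A : V → V → Prop} {u v : V} (h : HasWalkLen A 2 u v) :
    ∃ x, A u x ∧ A x v := by
  obtain ⟨l, h1, h2, h3, h4⟩ := h
  obtain ⟨a, b, c, rfl⟩ := List.length_eq_three.mp h4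
  simp at h1 h2
  subst h1; subst h2
  simp only [List.Chain', List.isChain_cons_cons, List.isChain_singleton, and_true] at h3
  exact ⟨b, h3.1, h3.2⟩

lemma geo_ne {V : Type*} {A : V → V → Prop} (hgeo : Geodetic A 2) {a b c : V}
    (h1 : A a c) (h2 : A a b) (h3 : A b c) : False := by
  have := hgeo a c [a, c] [a, b, c]
    ⟨by simp, by simp, by simp [List.Chain', h1], by simp⟩
    ⟨by simp, by simp, by simp [List.Chain', h2, h3], by simp⟩
  simp at this

lemma cycle2 {V : Type*} {A : V → V → Prop} (hgeo : Geodetic A 2) {a b : V}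
    (h1 : A a b) (h2 : A b a) : False := by
  have := hgeo a a [a] [a, b, a]
    ⟨by simp, by simp, by simp [List.Chain'], by simp⟩
    ⟨by simp, by simp, by simp [List.Chain', h1, h2], by simp⟩
  simp at this

/-- In a diregular `(2,2,+2)`-digraph, for vertices `u, v` with unique common
out-neighbour `u₂` (`N⁺(u) = {u₁,u₂}`, `N⁺(v) = {v₁,u₂}`, `u₁ ≠ v₁`):
if `v ∉ O(u)` then `v ∈ N⁺(u₁)`, and if `v₁ ∉ O(u)` then `v₁ ∈ N⁺(u₁)`. -/
theorem stmt_9 {V : Type*} [Fintype V] (A : V → V → Prop)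
    (hgeo : Geodetic A 2)
    (hdeg : ∀ w, outDeg A w = 2 ∧ inDeg A w = 2)
    (hcard : Fintype.card V = 9)
    (u v u₁ u₂ v₁ : V) (huv : u ≠ v)
    (h12 : u₁ ≠ u₂) (hv2 : v₁ ≠ u₂) (h11 : u₁ ≠ v₁)
    (hu : Nplus A u = {u₁, u₂}) (hv : Nplus A v = {v₁, u₂}) :
    (v ∉ Outliers A 2 u → v ∈ Nplus A u₁) ∧
    (v₁ ∉ Outliers A 2 u → v₁ ∈ Nplus A u₁) := by
  have hAu1 : A u u₁ := by
    have : u₁ ∈ Nplus A u := by rw [hu]; simp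
    exact this
  have hAu2 : A u u₂ := by
    have : u₂ ∈ Nplus A u := by rw [hu]; simp
    exact this
  have hAv1 : A v v₁ := by
    have : v₁ ∈ Nplus A v := by rw [hv]; simp
    exact this
  have hAv2 : A v u₂ := by
    have : u₂ ∈ Nplus A v := by rw [hv]; simp
    exact this
  constructor
  · intro h
    have hd : DistLe A 2 u v := not_not.mp h
    obtain ⟨m, hm, hw⟩ := hd
    interval_cases m
    · exact absurd (walk0 hw) huv
    · -- A u v, so v = u₁ or v = u₂
      have hv' : v ∈ ({u₁, u₂} : Set V) := hu ▸ walk1 hw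
      rcases hv' with rfl | rfl
      · exact ((geo_ne hgeo hAu2 hAu1 hAv2)).elim
      · exact ((cycle2 hgeo hAv2 hAv2)).elim
    · obtain ⟨x, hx1, hx2⟩ := walk2 hw
      have hx' : x ∈ ({u₁, u₂} : Set V) := hu ▸ hx1
      rcases hx' with rfl | rfl
      · exact hx2
      · exact ((cycle2 hgeo hx2 hAv2)).elim
  · intro h
    have hd : DistLe A 2 u v₁ := not_not.mp h
    obtain ⟨m, hm, hw⟩ := hd
    interval_cases m
    · -- v₁ = u
      have := walk0 hw
      subst this
      exact ((geo_ne hgeo hAv2 hAv1 hAu2)).elim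
    · have hv' : v₁ ∈ ({u₁, u₂} : Set V) := hu ▸ walk1 hw
      rcases hv' with rfl | rfl
      · exact (h11 rfl).elim
      · exact (hv2 rfl).elim
    · obtain ⟨x, hx1, hx2⟩ := walk2 hw
      have hx' : x ∈ ({u₁, u₂} : Set V) := hu ▸ hx1
      rcases hx' with rfl | rfl
      · exact hx2
      · exact ((geo_ne hgeo hAv1 hAv2 hx2)).elim
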